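/- Let A_k = {a_1, ..., a_k} with a_1 = 1 be a symmetric basis (a_i + a_{k-i} = a_k for 1 ≤ i ≤ k-1), and suppose every integer 0 ≤ x ≤ a_k is a sum of at most h_0 elements of A_k with repetition, where h_0 ≥ 2. Then with h = 2h_0 − 2, every integer 0 ≤ x ≤ h·a_k is a sum of at most h elements of A_k. -/

import Mathlib

/-- `n` is a sum of at most `h` elements of the basis `a 1, …, a k`
(repetition allowed), expressed with coefficients. -/
def RepIdx (a : ℕ → ℕ) (k h n : ℕ) : Prop :=
  ∃ c : ℕ → ℕ, (∑ i ∈ Finset.Icc 1 k, c i) ≤ h ∧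
    (∑ i ∈ Finset.Icc 1 k, c i * a i) = n

theorem stmt4 (a : ℕ → ℕ) (k h₀ : ℕ) (hk : 2 ≤ k) (hh0 : 2 ≤ h₀)
    (ha1 : a 1 = 1)
    (hmono : ∀ i j, 1 ≤ i → i < j → j ≤ k → a i < a j)
    (hsymm : ∀ i, 1 ≤ i → i ≤ k - 1 → a i + a (k - i) = a k)
    (hcov : ∀ x, x ≤ a k → RepIdx a k h₀ x) :
    ∀ x, x ≤ (2 * h₀ - 2) * a k → RepIdx a k (2 * h₀ - 2) x := by
  obtain ⟨m, hm, rfl⟩ : ∃ m, 1 ≤ m ∧ k = m + 1 := ⟨k - 1, by omega, by omega⟩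
  intro x hx
  have hak : 1 ≤ a (m + 1) := by
    have := hmono 1 (m + 1) le_rfl (by omega) le_rfl
    omega
  obtain ⟨A, hA⟩ : ∃ A, A = a (m + 1) := ⟨_, rfl⟩
  rw [← hA] at hx hak hcov
  set S := Finset.Icc 1 m with hS
  have hsplit : ∀ f : ℕ → ℕ,
      ∑ i ∈ Finset.Icc 1 (m + 1), f i = (∑ i ∈ S, f i) + f (m + 1) := by
    intro f
    rw [hS]
    exact Finset.sum_Icc_succ_top (by omega) f
  have hnot : ∀ i ∈ S, i ≠ m + 1 := by
    intro i hi
    simp only [hS, Finset.mem_Icc] at hi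
    omega
  obtain ⟨q, r, hqr, hrA⟩ : ∃ q r, A * q + r = x ∧ r < A :=
    ⟨x / A, x % A, Nat.div_add_mod x A, Nat.mod_lt _ (by omega)⟩
  by_cases hr0 : r = 0
  · -- x = q * A : use q copies of a (m+1)
    have hqh : q ≤ 2 * h₀ - 2 := by
      have e : q * A = A * q := mul_comm _ _
      have h1 : q * A ≤ (2 * h₀ - 2) * A := by omega
      exact Nat.le_of_mul_le_mul_right h1 (by omega)
    refine ⟨fun i => if i = m + 1 then q else 0, ?_, ?_⟩
    · rw [hsplit]
      have h2 : ∑ i ∈ S, (if i = m + 1 then q else 0) = 0 :=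
        Finset.sum_eq_zero fun i hi => if_neg (hnot i hi)
      simp only [h2, zero_add]
      simp only [if_true]
      exact hqh
    · rw [hsplit]
      have h2 : ∑ i ∈ S, (if i = m + 1 then q else 0) * a i = 0 :=
        Finset.sum_eq_zero fun i hi => by rw [if_neg (hnot i hi), zero_mul]
      simp only [h2, zero_add, ← hA, if_true]
      have e : q * A = A * q := mul_comm _ _
      omega
  · by_cases hqs : q ≤ h₀ - 2
    · -- small quotient : x = q * A + r, r representable with ≤ h₀ elements
      obtain ⟨c, hc1, hc2⟩ := hcov r (by omega)
      refine ⟨fun i => c i + if i = m + 1 then q else 0, ?_, ?_⟩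
      · rw [Finset.sum_add_distrib, hsplit (fun i => if i = m + 1 then q else 0)]
        have h2 : ∑ i ∈ S, (if i = m + 1 then q else 0) = 0 :=
          Finset.sum_eq_zero fun i hi => if_neg (hnot i hi)
        simp only [h2, zero_add, if_true]
        omega
      · simp only [add_mul]
        rw [Finset.sum_add_distrib, hc2,
          hsplit (fun i => (if i = m + 1 then q else 0) * a i)]
        have h2 : ∑ i ∈ S, (if i = m + 1 then q else 0) * a i = 0 :=
          Finset.sum_eq_zero fun i hi => by rw [if_neg (hnot i hi), zero_mul]
        simp only [h2, zero_add, ← hA, if_true]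
        have e : q * A = A * q := mul_comm _ _
        omega
    · -- large quotient : use symmetry, represent A - r
      obtain ⟨c, hc1, hc2⟩ := hcov (A - r) (by omega)
      obtain ⟨s, hs⟩ : ∃ s, s = ∑ i ∈ Finset.Icc 1 (m + 1), c i := ⟨_, rfl⟩
      rw [← hs] at hc1
      have hck : c (m + 1) = 0 := by
        have hle : c (m + 1) * a (m + 1) ≤ A - r := by
          rw [← hc2]
          have hmem : m + 1 ∈ Finset.Icc 1 (m + 1) := Finset.mem_Icc.mpr ⟨by omega, le_rfl⟩
          exact Finset.single_le_sum (f := fun i => c i * a i) (fun i _ => Nat.zero_le _) hmem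
        rw [← hA] at hle
        by_contra hne
        have h2 : 1 * A ≤ c (m + 1) * A := Nat.mul_le_mul_right A (by omega)
        rw [one_mul] at h2
        omega
      have hs1 : 1 ≤ s := by
        by_contra hs0
        have h0 : ∀ i ∈ Finset.Icc 1 (m + 1), c i = 0 := by
          rw [← Finset.sum_eq_zero_iff]
          omega
        have h3 : ∑ i ∈ Finset.Icc 1 (m + 1), c i * a i = 0 :=
          Finset.sum_eq_zero fun i hi => by rw [h0 i hi, zero_mul]
        omega
      have hsS : ∑ i ∈ S, c i = s := by
        rw [hs, hsplit, hck, add_zero]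
      have hcS : ∑ i ∈ S, c i * a i = A - r := by
        have h6 := hsplit (fun i => c i * a i)
        simp only [hck, zero_mul, add_zero] at h6
        rw [← h6]
        exact hc2
      have hq1 : q + 1 ≤ 2 * h₀ - 2 := by
        have e : q * A = A * q := mul_comm _ _
        have h1 : q * A < (2 * h₀ - 2) * A := by omega
        have h7 := lt_of_mul_lt_mul_right h1 (Nat.zero_le A)
        omega
      have hsq : s ≤ q + 1 := by omega
      -- reindexing i ↦ m + 1 - i on S
      have hrei : ∑ i ∈ S, c (m + 1 - i) * a i = ∑ j ∈ S, c j * a (m + 1 - j) := by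
        refine Finset.sum_nbij' (fun i => m + 1 - i) (fun j => m + 1 - j) ?_ ?_ ?_ ?_ ?_
        · intro i hi; simp only [hS, Finset.mem_Icc] at *; omega
        · intro i hi; simp only [hS, Finset.mem_Icc] at *; omega
        · intro i hi
          simp only [hS, Finset.mem_Icc] at hi
          show m + 1 - (m + 1 - i) = i
          omega
        · intro i hi
          simp only [hS, Finset.mem_Icc] at hi
          show m + 1 - (m + 1 - i) = i
          omega
        · intro i hi
          simp only [hS, Finset.mem_Icc] at hi
          show c (m + 1 - i) * a i = c (m + 1 - i) * a (m + 1 - (m + 1 - i))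
          have h5 : m + 1 - (m + 1 - i) = i := by omega
          rw [h5]
      have hpair : (∑ j ∈ S, c j * a (m + 1 - j)) + (∑ j ∈ S, c j * a j) = s * A := by
        rw [← Finset.sum_add_distrib, ← hsS, Finset.sum_mul]
        refine Finset.sum_congr rfl fun j hj => ?_
        simp only [hS, Finset.mem_Icc] at hj
        have hsj : a j + a (m + 1 - j) = A := by
          rw [hA]; exact hsymm j hj.1 (by omega)
        rw [← mul_add, add_comm (a (m + 1 - j)), hsj]
      refine ⟨fun i => if i = m + 1 then q + 1 - s else c (m + 1 - i), ?_, ?_⟩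
      · rw [hsplit]
        have h1 : ∑ i ∈ S, (if i = m + 1 then q + 1 - s else c (m + 1 - i)) =
            ∑ i ∈ S, c (m + 1 - i) :=
          Finset.sum_congr rfl fun i hi => if_neg (hnot i hi)
        have h2 : ∑ i ∈ S, c (m + 1 - i) = ∑ i ∈ S, c i := by
          refine Finset.sum_nbij' (fun i => m + 1 - i) (fun j => m + 1 - j) ?_ ?_ ?_ ?_ ?_
          · intro i hi; simp only [hS, Finset.mem_Icc] at *; omega
          · intro i hi; simp only [hS, Finset.mem_Icc] at *; omega
          · intro i hi
            simp only [hS, Finset.mem_Icc] at hi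
            show m + 1 - (m + 1 - i) = i
            omega
          · intro i hi
            simp only [hS, Finset.mem_Icc] at hi
            show m + 1 - (m + 1 - i) = i
            omega
          · intro i hi; rfl
        rw [h1, h2, hsS]
        simp only [if_true]
        omega
      · rw [hsplit]
        have h1 : ∑ i ∈ S, (if i = m + 1 then q + 1 - s else c (m + 1 - i)) * a i =
            ∑ i ∈ S, c (m + 1 - i) * a i :=
          Finset.sum_congr rfl fun i hi => by rw [if_neg (hnot i hi)]
        rw [h1, hrei]
        simp only [← hA, if_true]
        -- goal : (∑ j ∈ S, c j * a (m+1-j)) + (q + 1 - s) * A = x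
        have e1 : (q + 1 - s) * A + s * A = (q + 1) * A := by
          rw [← add_mul]
          congr 1
          omega
        have e2 : (q + 1) * A = A * q + A := by ring
        have hTp : (∑ j ∈ S, c j * a (m + 1 - j)) + (A - r) = s * A := by
          rw [← hcS]
          exact hpair
        omega
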